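/- With the greedy setting of Proposition on Algorithm 1: for N ≥ 3 and each t ∈ {0,…,N−2}, the greedy output satisfies |Ṽ_k| ≥ f(t), where f(t) = (t/(N−1))|Ṽ*| + [ (N−t−1)/(N−1) + Σ_{j=1}^{t} (N−t−1)/(N−j) − t ]·|V_{i₁*}|, with V_{i₁*} the set chosen in the first greedy iteration and Ṽ* the optimal union. -/

import Mathlib

open Finset

variable {X : Type*} [Fintype X] [DecidableEq X]

/-- The union of the greedy picks made before iteration `t`. -/
def greedyUnion (g : ℕ → Finset X) (t : ℕ) : Finset X := (Finset.range t).biUnion g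

/-- The hypotheses modelling problem `P` and the greedy Algorithm 1:
`U i` is the (nonempty, downward-closed) family of candidate sets of collection `i`;
`Vstar` is an optimal selection; at iteration `t < N` the greedy algorithm picks the
not-yet-used collection `ord t` and a set `g t ∈ U (ord t)` maximizing the size of the
union with everything picked so far. -/
structure GreedySetting (N : ℕ) (U : Fin N → Set (Finset X)) (Vstar : Fin N → Finset X)
    (ord : ℕ → Fin N) (g : ℕ → Finset X) : Prop where
  nonempty : ∀ i, (U i).Nonempty
  downClosed : ∀ i, ∀ V ∈ U i, ∀ W ⊆ V, W ∈ U i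
  star_mem : ∀ i, Vstar i ∈ U i
  star_opt : ∀ W : Fin N → Finset X, (∀ i, W i ∈ U i) →
    (Finset.univ.biUnion W).card ≤ (Finset.univ.biUnion Vstar).card
  ord_inj : ∀ s t, s < N → t < N → ord s = ord t → s = t
  pick_mem : ∀ t < N, g t ∈ U (ord t)
  pick_greedy : ∀ t < N, ∀ i : Fin N, (∀ s < t, ord s ≠ i) → ∀ V ∈ U i,
    (greedyUnion g t ∪ V).card ≤ (greedyUnion g t ∪ g t).card

lemma greedyUnion_mono (g : ℕ → Finset X) {s t : ℕ} (h : s ≤ t) :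
    greedyUnion g s ⊆ greedyUnion g t :=
  Finset.biUnion_subset_biUnion_of_subset_left _ (Finset.range_subset_range.2 h)

lemma greedyUnion_succ (g : ℕ → Finset X) (t : ℕ) :
    greedyUnion g (t + 1) = greedyUnion g t ∪ g t := by
  simp [greedyUnion, Finset.range_add_one, Finset.biUnion_insert, Finset.union_comm]

/-- Key natural-number greedy inequality at step `t`. -/
lemma greedy_key {N : ℕ} (hN : 3 ≤ N) (U : Fin N → Set (Finset X)) (Vstar : Fin N → Finset X)
    (ord : ℕ → Fin N) (g : ℕ → Finset X) (hs : GreedySetting N U Vstar ord g)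
    {t : ℕ} (ht : t < N) :
    (Finset.univ.biUnion Vstar).card + (N - t) * (greedyUnion g t).card ≤
      (greedyUnion g t).card + t * (g 0).card + (N - t) * (greedyUnion g (t + 1)).card := by
  have habound : ∀ i : Fin N, ∀ V ∈ U i, V.card ≤ (g 0).card := by
    intro i V hV
    have h := hs.pick_greedy 0 (by omega) i (by intro s hs' ; omega) V hV
    simpa [greedyUnion] using h
  set G := greedyUnion g t with hG
  set G' := greedyUnion g (t + 1) with hG'
  set T : Finset (Fin N) := (Finset.range t).image ord with hT
  have hTcard : T.card = t := by
    rw [hT, Finset.card_image_of_injOn, Finset.card_range]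
    intro a ha b hb hab
    exact hs.ord_inj a b (lt_of_lt_of_le (Finset.mem_range.1 ha) ht.le)
      (lt_of_lt_of_le (Finset.mem_range.1 hb) ht.le) hab
  have hTc : Tᶜ.card = N - t := by
    rw [Finset.card_compl, hTcard]; simp
  -- First bound: S ≤ |G| + ∑ |Vstar i \ G|
  have h1 : (Finset.univ.biUnion Vstar).card ≤
      G.card + ∑ i : Fin N, (Vstar i \ G).card := by
    have hsub : Finset.univ.biUnion Vstar ⊆
        G ∪ Finset.univ.biUnion (fun i => Vstar i \ G) := by
      intro x hx
      simp only [Finset.mem_biUnion, Finset.mem_univ, true_and] at hx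
      obtain ⟨i, hi⟩ := hx
      by_cases hxG : x ∈ G
      · exact Finset.mem_union_left _ hxG
      · exact Finset.mem_union_right _ (by
          simp only [Finset.mem_biUnion, Finset.mem_univ, true_and, Finset.mem_sdiff]
          exact ⟨i, hi, hxG⟩)
    calc (Finset.univ.biUnion Vstar).card ≤ _ := Finset.card_le_card hsub
      _ ≤ G.card + (Finset.univ.biUnion (fun i => Vstar i \ G)).card :=
        Finset.card_union_le _ _
      _ ≤ G.card + ∑ i : Fin N, (Vstar i \ G).card := by
        exact Nat.add_le_add_left (Finset.card_biUnion_le) _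
  -- split the sum
  have hsplit : ∑ i : Fin N, (Vstar i \ G).card =
      (∑ i ∈ T, (Vstar i \ G).card) + ∑ i ∈ Tᶜ, (Vstar i \ G).card :=
    (Finset.sum_add_sum_compl T _).symm
  -- used part
  have hused : ∑ i ∈ T, (Vstar i \ G).card ≤ t * (g 0).card := by
    calc ∑ i ∈ T, (Vstar i \ G).card ≤ ∑ i ∈ T, (g 0).card := by
          refine Finset.sum_le_sum fun i _ => ?_
          exact le_trans (Finset.card_le_card Finset.sdiff_subset)
            (habound i _ (hs.star_mem i))
      _ = t * (g 0).card := by rw [Finset.sum_const, hTcard, smul_eq_mul]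
  -- unused part
  have hunused : ∀ i ∈ Tᶜ, G.card + (Vstar i \ G).card ≤ G'.card := by
    intro i hi
    have hnew : ∀ s < t, ord s ≠ i := by
      intro s hs' hne
      exact (Finset.mem_compl.1 hi)
        (Finset.mem_image.2 ⟨s, Finset.mem_range.2 hs', hne⟩)
    have hW : Vstar i \ G ∈ U i :=
      hs.downClosed i _ (hs.star_mem i) _ Finset.sdiff_subset
    have hpg := hs.pick_greedy t ht i hnew _ hW
    rw [hG', greedyUnion_succ]
    calc G.card + (Vstar i \ G).card = (G ∪ (Vstar i \ G)).card :=
          (Finset.card_union_of_disjoint Finset.disjoint_sdiff).symm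
      _ ≤ (G ∪ g t).card := hpg
  have hosum : ∑ i ∈ Tᶜ, (Vstar i \ G).card + (N - t) * G.card ≤ (N - t) * G'.card := by
    have := Finset.sum_le_sum hunused
    rw [Finset.sum_add_distrib, Finset.sum_const, Finset.sum_const, hTc, smul_eq_mul,
      smul_eq_mul] at this
    linarith
  linarith [h1, hsplit, hused, hosum]

theorem greedy_refined_bound {N : ℕ} (hN : 3 ≤ N) (U : Fin N → Set (Finset X))
    (Vstar : Fin N → Finset X) (ord : ℕ → Fin N) (g : ℕ → Finset X)
    (hs : GreedySetting N U Vstar ord g) :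
    ∀ t : ℕ, t + 2 ≤ N →
      ((greedyUnion g N).card : ℝ) ≥
        ((t : ℝ) / ((N : ℝ) - 1)) * (Finset.univ.biUnion Vstar).card +
          (((N : ℝ) - t - 1) / ((N : ℝ) - 1) +
              (∑ j ∈ Finset.Icc 1 t, ((N : ℝ) - t - 1) / ((N : ℝ) - j)) - t) *
            ((g 0).card : ℝ) := by
  intro t ht
  have hNR : (3 : ℝ) ≤ (N : ℝ) := by exact_mod_cast hN
  have hN1 : (N : ℝ) - 1 ≠ 0 := by linarith
  set S : ℝ := ((Finset.univ.biUnion Vstar).card : ℝ) with hSdef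
  set a : ℝ := ((g 0).card : ℝ) with hadef
  set G : ℕ → ℝ := fun n => ((greedyUnion g n).card : ℝ) with hGdef
  have keyR : ∀ τ : ℕ, τ < N →
      S + ((N : ℝ) - τ) * G τ ≤ G τ + (τ : ℝ) * a + ((N : ℝ) - τ) * G (τ + 1) := by
    intro τ hτ
    have h := greedy_key hN U Vstar ord g hs hτ
    have h' := (Nat.cast_le (α := ℝ)).2 h
    push_cast [Nat.cast_sub hτ.le] at h'
    simp only [hSdef, hadef, hGdef]
    linarith
  set P : ℕ → ℝ := fun n => ∑ j ∈ Finset.Icc 1 n, ((N : ℝ) - j)⁻¹ with hPdef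
  set f : ℕ → ℝ := fun n =>
    ((n : ℝ) / ((N : ℝ) - 1)) * S +
      (((N : ℝ) - n - 1) / ((N : ℝ) - 1) + ((N : ℝ) - n - 1) * P n - n) * a with hfdef
  have main : ∀ n : ℕ, n + 2 ≤ N → f n ≤ G (n + 1) := by
    intro n
    induction n with
    | zero =>
      intro _
      have hG1 : G 1 = a := by
        simp [hGdef, hadef, greedyUnion]
      have hf0 : f 0 = a := by
        have hP0 : P 0 = 0 := by simp [hPdef]
        simp only [hfdef, hP0, Nat.cast_zero]
        field_simp
        ring
      rw [hf0, hG1]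
    | succ n ih =>
      intro h
      have hfn := ih (by omega)
      have hk := keyR (n + 1) (by omega)
      have hNn : ((n : ℝ) + 3) ≤ (N : ℝ) := by exact_mod_cast h
      have hpos : (0 : ℝ) < (N : ℝ) - n - 2 + 1 := by linarith
      have hpos' : (0 : ℝ) < (N : ℝ) - (n : ℝ) - 1 := by linarith
      have hge0 : (0 : ℝ) ≤ (N : ℝ) - n - 2 := by linarith
      have hne : (N : ℝ) - (n : ℝ) - 1 ≠ 0 := ne_of_gt hpos'
      -- identity: (N-n-1) f(n+1) = (N-n-2) f n + S - (n+1) a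
      have hid : ((N : ℝ) - n - 1) * f (n + 1) = ((N : ℝ) - n - 2) * f n + S - ((n : ℝ) + 1) * a := by
        have hPs : P (n + 1) = P n + ((N : ℝ) - (n : ℝ) - 1)⁻¹ := by
          simp only [hPdef]
          rw [Finset.sum_Icc_succ_top (by omega : 1 ≤ n + 1)]
          push_cast
          rw [sub_sub]
        simp only [hfdef, hPs]
        push_cast
        field_simp
        ring
      have hfle : ((N : ℝ) - n - 2) * f n ≤ ((N : ℝ) - n - 2) * G (n + 1) :=
        mul_le_mul_of_nonneg_left hfn hge0
      have hkc : S + ((N : ℝ) - ((n : ℝ) + 1)) * G (n + 1) ≤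
          G (n + 1) + ((n : ℝ) + 1) * a + ((N : ℝ) - ((n : ℝ) + 1)) * G (n + 2) := by
        push_cast at hk
        linarith
      have step1 : ((N : ℝ) - (n : ℝ) - 1) * f (n + 1) ≤ ((N : ℝ) - (n : ℝ) - 1) * G (n + 2) := by
        rw [hid]
        nlinarith [hfle, hkc]
      exact le_of_mul_le_mul_left step1 hpos'
  have hmono : G (t + 1) ≤ G N := by
    simp only [hGdef]
    exact_mod_cast Finset.card_le_card (greedyUnion_mono g (by omega))
  have hmain := main t ht
  have hexpr : (∑ j ∈ Finset.Icc 1 t, ((N : ℝ) - t - 1) / ((N : ℝ) - j)) =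
      ((N : ℝ) - t - 1) * P t := by
    rw [hPdef, Finset.mul_sum]
    exact Finset.sum_congr rfl fun j _ => div_eq_mul_inv _ _
  rw [ge_iff_le, hexpr]
  calc ((t : ℝ) / ((N : ℝ) - 1)) * S +
        (((N : ℝ) - t - 1) / ((N : ℝ) - 1) + ((N : ℝ) - t - 1) * P t - t) * a = f t := by
        simp [hfdef]
    _ ≤ G (t + 1) := hmain
    _ ≤ G N := hmono
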